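/- Let η > 0 and t > 0 and define K_η(t,x) = ∫_ℝ e^{2πi x ξ} e^{iξ³t − ηt(|ξ|³−|ξ|)} dξ. Then there exists a constant c_η > 0 depending only on η, of the form c_η = C η^{−1/3}(1 + (1/η + 2)²), such that for all x ∈ ℝ, |K_η(t,x)| ≤ c_η (e^{5ηt}/t^{1/3}) · 1/(1+|x|²). -/

import Mathlib

open MeasureTheory

noncomputable def ostSymbol (η t ξ : ℝ) : ℂ :=
  Complex.exp (Complex.I * ((ξ ^ 3 * t : ℝ) : ℂ) - ((η * t * (|ξ| ^ 3 - |ξ|) : ℝ) : ℂ))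

noncomputable def ostKernel (η t x : ℝ) : ℂ :=
  ∫ ξ : ℝ, Complex.exp (2 * Real.pi * Complex.I * ((x * ξ : ℝ) : ℂ)) * ostSymbol η t ξ

open Real Set Filter Topology

lemma aux_intOn (k : ℕ) {c : ℝ} (hc : 0 < c) :
    IntegrableOn (fun ξ : ℝ => ξ ^ k * Real.exp (-c * ξ ^ 3)) (Set.Ioi 0) := by
  have h := integrableOn_rpow_mul_exp_neg_mul_rpow (s := (k:ℝ)) (p := 3)
      (lt_of_lt_of_le neg_one_lt_zero (Nat.cast_nonneg k)) (by norm_num) hc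
  refine h.congr_fun (fun ξ hξ => ?_) measurableSet_Ioi
  beta_reduce
  rw [show ((3:ℝ)) = ((3:ℕ):ℝ) by norm_num, Real.rpow_natCast, Real.rpow_natCast]

lemma aux_intval (k : ℕ) {c : ℝ} (hc : 0 < c) :
    ∫ ξ in Set.Ioi (0:ℝ), ξ ^ k * Real.exp (-c * ξ ^ 3)
      = c ^ (-((k:ℝ) + 1) / 3) * (1 / 3) * Real.Gamma (((k:ℝ) + 1) / 3) := by
  rw [← integral_rpow_mul_exp_neg_mul_rpow (by norm_num : (0:ℝ) < 3)
      (lt_of_lt_of_le neg_one_lt_zero (Nat.cast_nonneg k)) hc]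
  refine setIntegral_congr_fun measurableSet_Ioi (fun ξ hξ => ?_)
  rw [show ((3:ℝ)) = ((3:ℕ):ℝ) by norm_num, Real.rpow_natCast, Real.rpow_natCast]

lemma aux_rpow_le_exp {a : ℝ} (ha : 0 < a) {m : ℝ} (hm : 0 ≤ m) (hm4 : m ≤ 4) :
    a ^ m ≤ Real.exp (4 * a) := by
  rcases le_total a 1 with h | h
  · calc a ^ m ≤ 1 := Real.rpow_le_one ha.le h hm
    _ ≤ Real.exp (4 * a) := Real.one_le_exp (by positivity)
  · calc a ^ m ≤ a ^ (4:ℝ) := Real.rpow_le_rpow_of_exponent_le h hm4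
    _ ≤ (Real.exp a) ^ (4:ℝ) := by
        apply Real.rpow_le_rpow ha.le _ (by norm_num)
        linarith [Real.add_one_le_exp a]
    _ = Real.exp (4 * a) := by rw [← Real.exp_mul]; ring_nf



noncomputable def oF (η t x ξ : ℝ) : ℂ :=
  Complex.exp (2 * Real.pi * Complex.I * ((x * ξ : ℝ) : ℂ)) * ostSymbol η t ξ

noncomputable def bc (η t : ℝ) : ℂ := (t : ℂ) * Complex.I - ((η * t : ℝ) : ℂ)

noncomputable def oG (η t : ℝ) (z : ℂ) : ℂ :=
  Complex.exp (bc η t * z ^ 3 + ((η * t : ℝ) : ℂ) * z)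

noncomputable def oG1 (η t : ℝ) (z : ℂ) : ℂ :=
  (3 * bc η t * z ^ 2 + ((η * t : ℝ) : ℂ)) * oG η t z

noncomputable def oG2 (η t : ℝ) (z : ℂ) : ℂ :=
  6 * bc η t * z * oG η t z + (3 * bc η t * z ^ 2 + ((η * t : ℝ) : ℂ)) * oG1 η t z

noncomputable def dd (x : ℝ) : ℂ := ((2 * Real.pi * x : ℝ) : ℂ) * Complex.I

noncomputable def oE (x : ℝ) (z : ℂ) : ℂ := Complex.exp (dd x * z)

noncomputable def oU (η t x : ℝ) (z : ℂ) : ℂ :=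
  oE x z * oG1 η t z - dd x * (oE x z * oG η t z)

noncomputable def oU' (η t x : ℝ) (z : ℂ) : ℂ :=
  oE x z * oG2 η t z - dd x ^ 2 * (oE x z * oG η t z)

lemma oG_hasDeriv (η t : ℝ) (z : ℂ) : HasDerivAt (oG η t) (oG1 η t z) z := by
  have hp : HasDerivAt (fun z : ℂ => bc η t * z ^ 3 + ((η * t : ℝ) : ℂ) * z)
      (bc η t * (3 * z ^ 2) + ((η * t : ℝ) : ℂ) * 1) z := by
    exact (((hasDerivAt_pow 3 z).const_mul (bc η t)).add
      ((hasDerivAt_id z).const_mul (((η * t : ℝ) : ℂ)))).congr_deriv (by push_cast; ring)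
  have := hp.cexp
  unfold oG oG1
  exact this.congr_deriv (by unfold oG; ring)

lemma oG1_hasDeriv (η t : ℝ) (z : ℂ) : HasDerivAt (oG1 η t) (oG2 η t z) z := by
  have hp : HasDerivAt (fun z : ℂ => 3 * bc η t * z ^ 2 + ((η * t : ℝ) : ℂ))
      (6 * bc η t * z) z := by
    exact (((hasDerivAt_pow 2 z).const_mul (3 * bc η t)).add_const _).congr_deriv (by push_cast; ring)
  have := hp.mul (oG_hasDeriv η t z)
  unfold oG1 oG2
  exact this

lemma oE_hasDeriv (x : ℝ) (z : ℂ) : HasDerivAt (oE x) (dd x * oE x z) z := by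
  have hp : HasDerivAt (fun z : ℂ => dd x * z) (dd x) z := by
    simpa using (hasDerivAt_id z).const_mul (dd x)
  have := hp.cexp
  unfold oE
  exact this.congr_deriv (by ring)

lemma oU_hasDeriv (η t x : ℝ) (z : ℂ) : HasDerivAt (oU η t x) (oU' η t x z) z := by
  have h1 := (oE_hasDeriv x z).mul (oG_hasDeriv η t z)
  have h2 := (oE_hasDeriv x z).mul (oG1_hasDeriv η t z)
  have h := h2.sub (h1.const_mul (dd x))
  unfold oU oU'
  exact h.congr_deriv (by ring)

lemma oG_norm (η t ξ : ℝ) : ‖oG η t (ξ : ℂ)‖ = Real.exp (η * t * ξ - η * t * ξ ^ 3) := by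
  unfold oG bc
  rw [show (((t : ℂ) * Complex.I - ((η * t : ℝ) : ℂ)) * (ξ:ℂ) ^ 3 + ((η * t : ℝ) : ℂ) * (ξ:ℂ))
      = Complex.I * ((t * ξ ^ 3 : ℝ) : ℂ) + (((η * t * ξ - η * t * ξ ^ 3 : ℝ)) : ℂ) by
    push_cast; ring]
  rw [Complex.norm_exp]
  simp [Complex.add_re, Complex.mul_re, ← Complex.ofReal_pow]

lemma oE_norm (x ξ : ℝ) : ‖oE x (ξ : ℂ)‖ = 1 := by
  unfold oE dd
  rw [Complex.norm_exp]
  simp [Complex.mul_re]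

lemma bc_norm_le (η t : ℝ) (ht : 0 ≤ t) (hη : 0 ≤ η) : ‖bc η t‖ ≤ t + η * t := by
  unfold bc
  calc ‖(t : ℂ) * Complex.I - ((η * t : ℝ) : ℂ)‖
      ≤ ‖(t : ℂ) * Complex.I‖ + ‖((η * t : ℝ) : ℂ)‖ := norm_sub_le _ _
  _ = |t| + |η| * |t| := by simp
  _ = t + η * t := by rw [abs_of_nonneg ht, abs_of_nonneg hη]

lemma oF_eq_pos (η t x : ℝ) {ξ : ℝ} (hξ : 0 < ξ) :
    oF η t x ξ = oE x (ξ : ℂ) * oG η t (ξ : ℂ) := by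
  unfold oF ostSymbol oE oG dd bc
  rw [← Complex.exp_add, ← Complex.exp_add]
  congr 1
  rw [abs_of_pos hξ]
  push_cast
  ring

lemma oF_conj (η t x ξ : ℝ) : oF η t x (-ξ) = (starRingEnd ℂ) (oF η t x ξ) := by
  unfold oF ostSymbol
  rw [map_mul, ← Complex.exp_conj, ← Complex.exp_conj]
  congr 1
  · rw [show ((2:ℂ) * (Real.pi:ℂ) * Complex.I * ((x * ξ : ℝ) : ℂ))
        = Complex.I * ((2 * Real.pi * (x * ξ) : ℝ) : ℂ) by push_cast; ring,
      map_mul, Complex.conj_I, Complex.conj_ofReal]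
    push_cast
    ring
  · rw [map_sub, map_mul, Complex.conj_I, Complex.conj_ofReal, Complex.conj_ofReal]
    rw [abs_neg]
    push_cast
    ring_nf

lemma oF_continuous (η t x : ℝ) : Continuous (oF η t x) := by
  unfold oF ostSymbol
  apply Continuous.mul
  · apply Complex.continuous_exp.comp
    apply Continuous.mul continuous_const
    exact Complex.continuous_ofReal.comp (continuous_const.mul continuous_id)
  · apply Complex.continuous_exp.comp
    apply Continuous.sub
    · exact Continuous.mul continuous_const
        (Complex.continuous_ofReal.comp (((continuous_pow 3)).mul continuous_const))
    · exact Complex.continuous_ofReal.comp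
        (continuous_const.mul ((continuous_abs.pow 3).sub continuous_abs))

lemma oEG_continuous (η t x : ℝ) : Continuous (fun ξ : ℝ => oE x (ξ:ℂ) * oG η t (ξ:ℂ)) := by
  unfold oE oG
  apply Continuous.mul
  · exact Complex.continuous_exp.comp (continuous_const.mul Complex.continuous_ofReal)
  · exact Complex.continuous_exp.comp (Continuous.add
      (continuous_const.mul (Complex.continuous_ofReal.pow 3))
      (continuous_const.mul Complex.continuous_ofReal))

lemma oEG2_continuous (η t x : ℝ) : Continuous (fun ξ : ℝ => oE x (ξ:ℂ) * oG2 η t (ξ:ℂ)) := by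
  have hG : Continuous (fun ξ : ℝ => oG η t (ξ:ℂ)) := by
    unfold oG
    exact Complex.continuous_exp.comp (Continuous.add
      (continuous_const.mul (Complex.continuous_ofReal.pow 3))
      (continuous_const.mul Complex.continuous_ofReal))
  have hE : Continuous (fun ξ : ℝ => oE x (ξ:ℂ)) := by
    unfold oE
    exact Complex.continuous_exp.comp (continuous_const.mul Complex.continuous_ofReal)
  have hG1 : Continuous (fun ξ : ℝ => oG1 η t (ξ:ℂ)) := by
    unfold oG1
    exact (((continuous_const.mul (Complex.continuous_ofReal.pow 2))).add continuous_const).mul hG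
  unfold oG2
  exact hE.mul ((((continuous_const.mul Complex.continuous_ofReal)).mul hG).add
    ((((continuous_const.mul (Complex.continuous_ofReal.pow 2))).add continuous_const).mul hG1))

noncomputable def VV (c : ℝ) (k : ℕ) : ℝ :=
  c ^ (-((k:ℝ) + 1) / 3) * (1 / 3) * Real.Gamma (((k:ℝ) + 1) / 3)

noncomputable def WW (η t ξ : ℝ) : ℝ :=
  Real.exp (η * t) *
    (6 * (t + η * t) * (ξ ^ 1 * Real.exp (-(η * t / 2) * ξ ^ 3)) +
      9 * (t + η * t) ^ 2 * (ξ ^ 4 * Real.exp (-(η * t / 2) * ξ ^ 3)) +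
      6 * (η * t) * (t + η * t) * (ξ ^ 2 * Real.exp (-(η * t / 2) * ξ ^ 3)) +
      (η * t) ^ 2 * (ξ ^ 0 * Real.exp (-(η * t / 2) * ξ ^ 3)))

lemma WW_int {η t : ℝ} (hη : 0 < η) (ht : 0 < t) : IntegrableOn (WW η t) (Set.Ioi 0) := by
  have hc : (0:ℝ) < η * t / 2 := by positivity
  unfold WW
  exact (((((aux_intOn 1 hc).const_mul _).add ((aux_intOn 4 hc).const_mul _)).add
    ((aux_intOn 2 hc).const_mul _)).add ((aux_intOn 0 hc).const_mul _)).const_mul _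

lemma int_split4 (f1 f2 f3 f4 : ℝ → ℝ) (h1 : IntegrableOn f1 (Set.Ioi 0))
    (h2 : IntegrableOn f2 (Set.Ioi 0)) (h3 : IntegrableOn f3 (Set.Ioi 0))
    (h4 : IntegrableOn f4 (Set.Ioi 0)) :
    ∫ ξ in Set.Ioi (0:ℝ), (f1 ξ + f2 ξ + f3 ξ + f4 ξ) =
      (∫ ξ in Set.Ioi (0:ℝ), f1 ξ) + (∫ ξ in Set.Ioi (0:ℝ), f2 ξ) +
        (∫ ξ in Set.Ioi (0:ℝ), f3 ξ) + (∫ ξ in Set.Ioi (0:ℝ), f4 ξ) := by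
  have H2 : Integrable (fun ξ : ℝ => f1 ξ + f2 ξ) (volume.restrict (Set.Ioi 0)) := h1.add h2
  have H3 : Integrable (fun ξ : ℝ => f1 ξ + f2 ξ + f3 ξ) (volume.restrict (Set.Ioi 0)) := H2.add h3
  rw [integral_add H3 h4, integral_add H2 h3, integral_add h1 h2]

lemma WW_val {η t : ℝ} (hη : 0 < η) (ht : 0 < t) :
    ∫ ξ in Set.Ioi (0:ℝ), WW η t ξ =
      Real.exp (η * t) * (6 * (t + η * t) * VV (η * t / 2) 1 +
        9 * (t + η * t) ^ 2 * VV (η * t / 2) 4 +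
        6 * (η * t) * (t + η * t) * VV (η * t / 2) 2 + (η * t) ^ 2 * VV (η * t / 2) 0) := by
  have hc : (0:ℝ) < η * t / 2 := by positivity
  have h1 := aux_intOn 1 hc
  have h4 := aux_intOn 4 hc
  have h2 := aux_intOn 2 hc
  have h0 := aux_intOn 0 hc
  unfold WW
  rw [integral_const_mul]
  congr 1
  rw [int_split4 _ _ _ _ (h1.const_mul _) (h4.const_mul _) (h2.const_mul _) (h0.const_mul _),
    integral_const_mul, integral_const_mul, integral_const_mul, integral_const_mul,
    aux_intval 1 hc, aux_intval 4 hc, aux_intval 2 hc, aux_intval 0 hc]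
  unfold VV
  norm_num

lemma oG_norm_le {η t : ℝ} (hη : 0 < η) (ht : 0 < t) {ξ : ℝ} (hξ : 0 ≤ ξ) :
    ‖oG η t (ξ:ℂ)‖ ≤ Real.exp (η * t) * Real.exp (-(η * t / 2) * ξ ^ 3) := by
  rw [oG_norm, ← Real.exp_add]
  apply Real.exp_le_exp.2
  nlinarith [mul_nonneg (mul_pos hη ht).le (mul_nonneg hξ (sq_nonneg (ξ - 1))),
    mul_nonneg (mul_pos hη ht).le (sq_nonneg (ξ - 3/4))]

lemma oG1_norm_le {η t : ℝ} (hη : 0 < η) (ht : 0 < t) {ξ : ℝ} (hξ : 0 ≤ ξ) :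
    ‖oG1 η t (ξ:ℂ)‖ ≤ (3 * (t + η * t) * ξ ^ 2 + η * t) * ‖oG η t (ξ:ℂ)‖ := by
  unfold oG1
  rw [norm_mul]
  have hb := bc_norm_le η t ht.le hη.le
  apply mul_le_mul_of_nonneg_right _ (norm_nonneg _)
  calc ‖3 * bc η t * (ξ:ℂ) ^ 2 + (((η * t : ℝ)) : ℂ)‖
      ≤ ‖3 * bc η t * (ξ:ℂ) ^ 2‖ + ‖(((η * t : ℝ)) : ℂ)‖ := norm_add_le _ _
    _ = 3 * ‖bc η t‖ * ξ ^ 2 + η * t := by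
        rw [norm_mul, norm_mul]
        simp [abs_of_nonneg hξ, abs_of_pos hη, abs_of_pos ht, sq_abs]
    _ ≤ 3 * (t + η * t) * ξ ^ 2 + η * t := by nlinarith [sq_nonneg ξ]

lemma oEG2_norm_le {η t : ℝ} (x : ℝ) (hη : 0 < η) (ht : 0 < t) {ξ : ℝ} (hξ : 0 ≤ ξ) :
    ‖oE x (ξ:ℂ) * oG2 η t (ξ:ℂ)‖ ≤ WW η t ξ := by
  rw [norm_mul, oE_norm, one_mul]
  have hb := bc_norm_le η t ht.le hη.le
  have hg := oG_norm_le hη ht hξ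
  have hg1 := oG1_norm_le hη ht hξ
  have hgn : (0:ℝ) ≤ ‖oG η t (ξ:ℂ)‖ := norm_nonneg _
  have hbn : (0:ℝ) ≤ ‖bc η t‖ := norm_nonneg _
  have hq : (0:ℝ) ≤ 3 * (t + η * t) * ξ ^ 2 + η * t := by positivity
  have h1 : ‖oG2 η t (ξ:ℂ)‖ ≤
      (6 * (t + η * t) * ξ + (3 * (t + η * t) * ξ ^ 2 + η * t) ^ 2) * ‖oG η t (ξ:ℂ)‖ := by
    unfold oG2
    calc ‖6 * bc η t * (ξ:ℂ) * oG η t (ξ:ℂ) +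
          (3 * bc η t * (ξ:ℂ) ^ 2 + (((η * t : ℝ)) : ℂ)) * oG1 η t (ξ:ℂ)‖
        ≤ ‖6 * bc η t * (ξ:ℂ) * oG η t (ξ:ℂ)‖ +
          ‖(3 * bc η t * (ξ:ℂ) ^ 2 + (((η * t : ℝ)) : ℂ)) * oG1 η t (ξ:ℂ)‖ := norm_add_le _ _
      _ ≤ 6 * (t + η * t) * ξ * ‖oG η t (ξ:ℂ)‖ +
          (3 * (t + η * t) * ξ ^ 2 + η * t) * ((3 * (t + η * t) * ξ ^ 2 + η * t) * ‖oG η t (ξ:ℂ)‖) := by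
          apply add_le_add
          · rw [norm_mul, norm_mul, norm_mul]
            simp only [Complex.norm_real]
            have : ‖(6:ℂ)‖ = 6 := by norm_num
            rw [this, Real.norm_eq_abs, abs_of_nonneg hξ]
            nlinarith [mul_nonneg hξ hgn, mul_nonneg (mul_nonneg (sub_nonneg.2 hb) hξ) hgn]
          · rw [norm_mul]
            apply mul_le_mul _ hg1 (norm_nonneg _) (by positivity)
            calc ‖3 * bc η t * (ξ:ℂ) ^ 2 + (((η * t : ℝ)) : ℂ)‖
                ≤ ‖3 * bc η t * (ξ:ℂ) ^ 2‖ + ‖(((η * t : ℝ)) : ℂ)‖ := norm_add_le _ _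
              _ = 3 * ‖bc η t‖ * ξ ^ 2 + η * t := by
                  rw [norm_mul, norm_mul]
                  simp [abs_of_nonneg hξ, abs_of_pos hη, abs_of_pos ht, sq_abs]
              _ ≤ 3 * (t + η * t) * ξ ^ 2 + η * t := by nlinarith [sq_nonneg ξ]
      _ = (6 * (t + η * t) * ξ + (3 * (t + η * t) * ξ ^ 2 + η * t) ^ 2) * ‖oG η t (ξ:ℂ)‖ := by ring
  calc ‖oG2 η t (ξ:ℂ)‖
      ≤ (6 * (t + η * t) * ξ + (3 * (t + η * t) * ξ ^ 2 + η * t) ^ 2) * ‖oG η t (ξ:ℂ)‖ := h1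
    _ ≤ (6 * (t + η * t) * ξ + (3 * (t + η * t) * ξ ^ 2 + η * t) ^ 2) *
        (Real.exp (η * t) * Real.exp (-(η * t / 2) * ξ ^ 3)) := by
        apply mul_le_mul_of_nonneg_left hg (by positivity)
    _ = WW η t ξ := by unfold WW; ring

lemma hEG_int {η t : ℝ} (x : ℝ) (hη : 0 < η) (ht : 0 < t) :
    IntegrableOn (fun ξ : ℝ => oE x (ξ:ℂ) * oG η t (ξ:ℂ)) (Set.Ioi 0) := by
  have hc : (0:ℝ) < η * t / 2 := by positivity
  apply Integrable.mono' (((aux_intOn 0 hc).const_mul (Real.exp (η * t))))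
    ((oEG_continuous η t x).aestronglyMeasurable.restrict)
  filter_upwards [ae_restrict_mem measurableSet_Ioi] with ξ hξ
  rw [norm_mul, oE_norm, one_mul]
  simpa using oG_norm_le hη ht (le_of_lt hξ)

lemma hEG2_int {η t : ℝ} (x : ℝ) (hη : 0 < η) (ht : 0 < t) :
    IntegrableOn (fun ξ : ℝ => oE x (ξ:ℂ) * oG2 η t (ξ:ℂ)) (Set.Ioi 0) := by
  apply Integrable.mono' (WW_int hη ht)
    ((oEG2_continuous η t x).aestronglyMeasurable.restrict)
  filter_upwards [ae_restrict_mem measurableSet_Ioi] with ξ hξ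
  exact oEG2_norm_le x hη ht (le_of_lt hξ)

lemma oU_tendsto {η t : ℝ} (x : ℝ) (hη : 0 < η) (ht : 0 < t) :
    Tendsto (fun ξ : ℝ => oU η t x (ξ:ℂ)) atTop (𝓝 0) := by
  apply squeeze_zero_norm'
    (a := fun ξ : ℝ => (3 * (t + η * t) + η * t + ‖dd x‖) * ((ξ^2 + 1) * Real.exp (-(η * t) * ξ)))
  · filter_upwards [eventually_ge_atTop (2:ℝ)] with ξ hξ2
    have hξ0 : (0:ℝ) ≤ ξ := by linarith
    have hg1 := oG1_norm_le hη ht hξ0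
    have hw : ‖oG η t (ξ:ℂ)‖ ≤ Real.exp (-(η * t) * ξ) := by
      rw [oG_norm]
      apply Real.exp_le_exp.2
      nlinarith [mul_nonneg (mul_nonneg (mul_pos hη ht).le hξ0) (by nlinarith : (0:ℝ) ≤ ξ^2 - 2)]
    have hdn : (0:ℝ) ≤ ‖dd x‖ := norm_nonneg _
    have hEx : (0:ℝ) ≤ Real.exp (-(η * t) * ξ) := (Real.exp_pos _).le
    calc ‖oU η t x (ξ:ℂ)‖
        ≤ ‖oE x (ξ:ℂ) * oG1 η t (ξ:ℂ)‖ + ‖dd x * (oE x (ξ:ℂ) * oG η t (ξ:ℂ))‖ := norm_sub_le _ _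
      _ = ‖oG1 η t (ξ:ℂ)‖ + ‖dd x‖ * ‖oG η t (ξ:ℂ)‖ := by
          rw [norm_mul, norm_mul, norm_mul, oE_norm, one_mul, one_mul]
      _ ≤ (3 * (t + η * t) * ξ^2 + η * t) * ‖oG η t (ξ:ℂ)‖ + ‖dd x‖ * ‖oG η t (ξ:ℂ)‖ := by
          exact add_le_add hg1 le_rfl
      _ = (3 * (t + η * t) * ξ^2 + η * t + ‖dd x‖) * ‖oG η t (ξ:ℂ)‖ := by ring
      _ ≤ (3 * (t + η * t) * ξ^2 + η * t + ‖dd x‖) * Real.exp (-(η * t) * ξ) := by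
          apply mul_le_mul_of_nonneg_left hw (by positivity)
      _ ≤ (3 * (t + η * t) + η * t + ‖dd x‖) * ((ξ^2 + 1) * Real.exp (-(η * t) * ξ)) := by
          have h1 : 3 * (t + η * t) * ξ^2 + η * t + ‖dd x‖
              ≤ (3 * (t + η * t) + η * t + ‖dd x‖) * (ξ^2 + 1) := by
                nlinarith [mul_nonneg hdn (sq_nonneg ξ),
                  mul_nonneg (mul_pos hη ht).le (sq_nonneg ξ), mul_pos hη ht, ht]
          nlinarith [mul_le_mul_of_nonneg_right h1 hEx]
  · have h1 := tendsto_rpow_mul_exp_neg_mul_atTop_nhds_zero 2 (η * t) (by positivity)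
    have h1' : Tendsto (fun ξ : ℝ => ξ^2 * Real.exp (-(η * t) * ξ)) atTop (𝓝 0) := by
      apply h1.congr'
      filter_upwards [eventually_gt_atTop (0:ℝ)] with ξ hξ
      rw [← Real.rpow_natCast ξ 2]
      norm_num
    have h2 : Tendsto (fun ξ : ℝ => Real.exp (-(η * t) * ξ)) atTop (𝓝 0) := by
      simpa using tendsto_rpow_mul_exp_neg_mul_atTop_nhds_zero 0 (η * t) (by positivity)
    have h3 := (h1'.add h2).const_mul (3 * (t + η * t) + η * t + ‖dd x‖)
    simp only [add_zero, mul_zero] at h3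
    exact h3.congr (fun ξ => by ring)

lemma ftc_identity (η t x : ℝ) (hη : 0 < η) (ht : 0 < t) :
    (∫ ξ in Set.Ioi (0:ℝ), oE x (ξ:ℂ) * oG2 η t (ξ:ℂ))
      - dd x ^ 2 * ∫ ξ in Set.Ioi (0:ℝ), oE x (ξ:ℂ) * oG η t (ξ:ℂ)
      = dd x - ((η * t : ℝ) : ℂ) := by
  have hEG := hEG_int x hη ht
  have hEG2 := hEG2_int x hη ht
  have hint : IntegrableOn (fun ξ : ℝ => oU' η t x (ξ:ℂ)) (Set.Ioi 0) := by
    have : (fun ξ : ℝ => oU' η t x (ξ:ℂ)) = fun ξ : ℝ =>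
        (oE x (ξ:ℂ) * oG2 η t (ξ:ℂ)) - dd x ^ 2 * (oE x (ξ:ℂ) * oG η t (ξ:ℂ)) := rfl
    rw [this]
    exact hEG2.sub (hEG.const_mul _)
  have hFTC := integral_Ioi_of_hasDerivAt_of_tendsto (a := (0:ℝ))
    (f := fun ξ : ℝ => oU η t x (ξ:ℂ)) (f' := fun ξ : ℝ => oU' η t x (ξ:ℂ))
    ((oU_hasDeriv η t x ((0:ℝ):ℂ)).comp_ofReal).continuousAt.continuousWithinAt
    (fun ξ _ => (oU_hasDeriv η t x (ξ:ℂ)).comp_ofReal)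
    hint (oU_tendsto x hη ht)
  have hsplit : ∫ ξ in Set.Ioi (0:ℝ), oU' η t x (ξ:ℂ)
      = (∫ ξ in Set.Ioi (0:ℝ), oE x (ξ:ℂ) * oG2 η t (ξ:ℂ))
        - dd x ^ 2 * ∫ ξ in Set.Ioi (0:ℝ), oE x (ξ:ℂ) * oG η t (ξ:ℂ) := by
    have h0 : (fun ξ : ℝ => oU' η t x (ξ:ℂ)) = fun ξ : ℝ =>
        (oE x (ξ:ℂ) * oG2 η t (ξ:ℂ)) - dd x ^ 2 * (oE x (ξ:ℂ) * oG η t (ξ:ℂ)) := rfl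
    rw [h0, integral_sub hEG2 (hEG.const_mul _), integral_const_mul]
  have hu0 : oU η t x (((0:ℝ)):ℂ) = ((η * t : ℝ) : ℂ) - dd x := by
    unfold oU oG1 oG oE bc
    simp
  rw [hsplit] at hFTC
  simp only [hu0] at hFTC
  rw [hFTC]
  ring

lemma hF_int_Ioi (η t x : ℝ) (hη : 0 < η) (ht : 0 < t) :
    IntegrableOn (oF η t x) (Set.Ioi 0) :=
  (hEG_int x hη ht).congr_fun (fun ξ hξ => (oF_eq_pos η t x hξ).symm) measurableSet_Ioi

lemma hF_int_Iic (η t x : ℝ) (hη : 0 < η) (ht : 0 < t) :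
    IntegrableOn (oF η t x) (Set.Iic 0) := by
  rw [← (Measure.measurePreserving_neg (volume : Measure ℝ)).integrableOn_comp_preimage
      (Homeomorph.neg ℝ).measurableEmbedding]
  simp only [Function.comp_def, neg_preimage, neg_Iic, neg_zero]
  rw [integrableOn_Ici_iff_integrableOn_Ioi]
  have hc : (0:ℝ) < η * t / 2 := by positivity
  apply Integrable.mono' (((aux_intOn 0 hc).const_mul (Real.exp (η * t))))
    (((oF_continuous η t x).comp continuous_neg).aestronglyMeasurable.restrict)
  filter_upwards [ae_restrict_mem measurableSet_Ioi] with ξ hξ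
  show ‖oF η t x (-ξ)‖ ≤ Real.exp (η * t) * (ξ ^ 0 * Real.exp (-(η * t / 2) * ξ ^ 3))
  rw [oF_conj, RCLike.norm_conj, oF_eq_pos η t x hξ, norm_mul, oE_norm, one_mul]
  simpa using oG_norm_le hη ht (le_of_lt hξ)

lemma kernel_eq (η t x : ℝ) (hη : 0 < η) (ht : 0 < t) :
    ostKernel η t x = (((2 * (∫ ξ in Set.Ioi (0:ℝ), oF η t x ξ).re : ℝ)) : ℂ) := by
  have h1 : ostKernel η t x = (∫ ξ in Set.Iic (0:ℝ), oF η t x ξ) + ∫ ξ in Set.Ioi (0:ℝ), oF η t x ξ := by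
    rw [intervalIntegral.integral_Iic_add_Ioi (hF_int_Iic η t x hη ht) (hF_int_Ioi η t x hη ht)]
    rfl
  have h2 : ∫ ξ in Set.Iic (0:ℝ), oF η t x ξ
      = (starRingEnd ℂ) (∫ ξ in Set.Ioi (0:ℝ), oF η t x ξ) := by
    have h3 : ∫ ξ in Set.Ioi (0:ℝ), oF η t x (-ξ) = ∫ ξ in Set.Iic (-(0:ℝ)), oF η t x ξ :=
      integral_comp_neg_Ioi 0 (oF η t x)
    rw [neg_zero] at h3
    rw [← h3]
    simp_rw [oF_conj]
    exact integral_conj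
  rw [h1, h2, add_comm ((starRingEnd ℂ) _), Complex.add_conj]

lemma hP_exp {a : ℝ} (ha : 0 < a) {p : ℝ} (h1 : 0 ≤ p + 1/3) (h2 : p + 1/3 ≤ 4) :
    Real.exp a * a ^ p ≤ Real.exp (5*a) * a ^ (-(1:ℝ)/3) := by
  have e1 : a ^ (p + 1/3) * a ^ (-(1:ℝ)/3) = a ^ p := by
    rw [← Real.rpow_add ha]
    norm_num
  rw [← e1]
  calc Real.exp a * (a^(p+1/3) * a^(-(1:ℝ)/3))
      ≤ Real.exp a * (Real.exp (4*a) * a^(-(1:ℝ)/3)) := by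
        apply mul_le_mul_of_nonneg_left _ (Real.exp_pos _).le
        exact mul_le_mul_of_nonneg_right (aux_rpow_le_exp ha h1 h2) (Real.rpow_nonneg ha.le _)
    _ = Real.exp (5*a) * a^(-(1:ℝ)/3) := by rw [← mul_assoc, ← Real.exp_add]; ring_nf

lemma hV_gen {a : ℝ} (ha : 0 < a) (k : ℕ) (hk : (k:ℝ) ≤ 5) :
    VV (a/2) k ≤ 4 * Real.Gamma (((k:ℝ)+1)/3) * a ^ (-((k:ℝ)+1)/3) := by
  unfold VV
  have hΓ : 0 < Real.Gamma (((k:ℝ)+1)/3) := Real.Gamma_pos_of_pos (by positivity)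
  have h2 : (a/2) ^ (-((k:ℝ)+1)/3) = a ^ (-((k:ℝ)+1)/3) * ((2:ℝ)⁻¹) ^ (-((k:ℝ)+1)/3) := by
    rw [div_eq_mul_inv, Real.mul_rpow ha.le (by norm_num)]
  have h3 : ((2:ℝ)⁻¹) ^ (-((k:ℝ)+1)/3) = (2:ℝ) ^ (((k:ℝ)+1)/3) := by
    rw [Real.inv_rpow (by norm_num), show (-((k:ℝ)+1)/3) = -(((k:ℝ)+1)/3) by ring,
      Real.rpow_neg (by norm_num), inv_inv]
  have h4 : ((2:ℝ)) ^ (((k:ℝ)+1)/3) ≤ 4 := by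
    calc ((2:ℝ)) ^ (((k:ℝ)+1)/3) ≤ (2:ℝ) ^ (2:ℝ) :=
        Real.rpow_le_rpow_of_exponent_le one_le_two (by
          have : (k:ℝ) ≤ 5 := hk
          linarith)
      _ = 4 := by
        rw [show ((2:ℝ)) = ((2:ℕ):ℝ) by norm_num, Real.rpow_natCast]
        norm_num
  have h5 : (0:ℝ) ≤ a ^ (-((k:ℝ)+1)/3) := Real.rpow_nonneg ha.le _
  rw [h2, h3]
  calc a ^ (-((k:ℝ)+1)/3) * (2:ℝ) ^ (((k:ℝ)+1)/3) * (1/3) * Real.Gamma (((k:ℝ)+1)/3)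
      ≤ a ^ (-((k:ℝ)+1)/3) * 4 * (1/3) * Real.Gamma (((k:ℝ)+1)/3) := by
        apply mul_le_mul_of_nonneg_right _ hΓ.le
        apply mul_le_mul_of_nonneg_right _ (by norm_num)
        exact mul_le_mul_of_nonneg_left h4 h5
    _ ≤ 4 * Real.Gamma (((k:ℝ)+1)/3) * a ^ (-((k:ℝ)+1)/3) := by nlinarith [hΓ, h5]

lemma hV0 {a : ℝ} (ha : 0 < a) : VV (a/2) 0 ≤ 4 * Real.Gamma (1/3) * a ^ (-(1:ℝ)/3) := by
  have h := hV_gen ha 0 (by norm_num)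
  norm_num at h
  convert h using 2 <;> norm_num

lemma hV1 {a : ℝ} (ha : 0 < a) : VV (a/2) 1 ≤ 4 * Real.Gamma (2/3) * a ^ (-(2:ℝ)/3) := by
  have h := hV_gen ha 1 (by norm_num)
  norm_num at h
  convert h using 2 <;> norm_num

lemma hV2 {a : ℝ} (ha : 0 < a) : VV (a/2) 2 ≤ 4 * Real.Gamma 1 * a ^ (-(1:ℝ)) := by
  have h := hV_gen ha 2 (by norm_num)
  norm_num at h
  convert h using 2 <;> norm_num

lemma hV4 {a : ℝ} (ha : 0 < a) : VV (a/2) 4 ≤ 4 * Real.Gamma (5/3) * a ^ (-(5:ℝ)/3) := by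
  have h := hV_gen ha 4 (by norm_num)
  norm_num at h
  convert h using 2 <;> norm_num


set_option maxHeartbeats 2000000 in
theorem stmt6 : ∃ C > (0:ℝ), ∀ η t x : ℝ, 0 < η → 0 < t →
    ‖ostKernel η t x‖ ≤
      (C * η ^ (-(1:ℝ)/3) * (1 + (1/η + 2) ^ 2)) *
        (Real.exp (5 * η * t) / t ^ ((1:ℝ)/3)) * (1 / (1 + |x| ^ 2)) := by
  have hΓ13 : 0 < Real.Gamma (1/3) := Real.Gamma_pos_of_pos (by norm_num)
  have hΓ23 : 0 < Real.Gamma (2/3) := Real.Gamma_pos_of_pos (by norm_num)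
  have hΓ1 : 0 < Real.Gamma 1 := Real.Gamma_pos_of_pos (by norm_num)
  have hΓ53 : 0 < Real.Gamma (5/3) := Real.Gamma_pos_of_pos (by norm_num)
  refine ⟨100 * (Real.Gamma (1/3) + Real.Gamma (2/3) + Real.Gamma 1 + Real.Gamma (5/3) + 1),
    by positivity, ?_⟩
  intro η t x hη ht
  have ha : 0 < η * t := mul_pos hη ht
  have hc : (0:ℝ) < η * t / 2 := by positivity
  set J := ∫ ξ in Set.Ioi (0:ℝ), oF η t x ξ with hJdef
  -- kernel norm
  have hKnorm : ‖ostKernel η t x‖ = 2 * |J.re| := by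
    rw [kernel_eq η t x hη ht, Complex.norm_real, Real.norm_eq_abs, abs_mul, abs_two]
  -- first bound : ‖K‖ ≤ 2 exp(a) V0
  have hA : ‖J‖ ≤ Real.exp (η*t) * VV (η*t/2) 0 := by
    have hb : ‖J‖ ≤ ∫ ξ in Set.Ioi (0:ℝ), Real.exp (η*t) * (ξ^0 * Real.exp (-(η*t/2)*ξ^3)) := by
      apply norm_integral_le_of_norm_le ((aux_intOn 0 hc).const_mul (Real.exp (η*t)))
      filter_upwards [ae_restrict_mem measurableSet_Ioi] with ξ hξ
      rw [oF_eq_pos η t x hξ, norm_mul, oE_norm, one_mul]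
      simpa using oG_norm_le hη ht (le_of_lt hξ)
    calc ‖J‖ ≤ _ := hb
      _ = Real.exp (η*t) * VV (η*t/2) 0 := by
          rw [integral_const_mul, aux_intval 0 hc]
          unfold VV
          norm_num
  have hK1 : ‖ostKernel η t x‖ ≤ 2 * (Real.exp (η*t) * VV (η*t/2) 0) := by
    rw [hKnorm]
    have := Complex.abs_re_le_norm J
    linarith [hA]
  -- second bound : x^2 ‖K‖ ≤ ∫ WW + a
  have hJEG : J = ∫ ξ in Set.Ioi (0:ℝ), oE x (ξ:ℂ) * oG η t (ξ:ℂ) :=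
    setIntegral_congr_fun measurableSet_Ioi (fun ξ hξ => oF_eq_pos η t x hξ)
  have hBnorm : ‖∫ ξ in Set.Ioi (0:ℝ), oE x (ξ:ℂ) * oG2 η t (ξ:ℂ)‖
      ≤ ∫ ξ in Set.Ioi (0:ℝ), WW η t ξ := by
    apply norm_integral_le_of_norm_le (WW_int hη ht)
    filter_upwards [ae_restrict_mem measurableSet_Ioi] with ξ hξ
    exact oEG2_norm_le x hη ht (le_of_lt hξ)
  have hid := ftc_identity η t x hη ht
  have h2 : dd x ^ 2 * J = (∫ ξ in Set.Ioi (0:ℝ), oE x (ξ:ℂ) * oG2 η t (ξ:ℂ))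
      - dd x + ((η*t : ℝ) : ℂ) := by
    rw [hJEG]
    linear_combination -hid
  have hd2 : dd x ^ 2 = (((-(2*Real.pi*x)^2) : ℝ) : ℂ) := by
    unfold dd
    rw [mul_pow, Complex.I_sq]
    push_cast
    ring
  have hdre : (dd x).re = 0 := by
    unfold dd
    simp
  have h3 := congrArg Complex.re h2
  rw [hd2, Complex.re_ofReal_mul] at h3
  simp only [Complex.sub_re, Complex.add_re, Complex.ofReal_re, hdre, sub_zero] at h3
  -- h3 : -(2πx)^2 * J.re = (∫ EG2).re + η*t
  have habs : (2*Real.pi*x)^2 * |J.re| ≤ (∫ ξ in Set.Ioi (0:ℝ), WW η t ξ) + η*t := by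
    have e1 : (2*Real.pi*x)^2 * |J.re| = |(-(2*Real.pi*x)^2) * J.re| := by
      rw [abs_mul, abs_neg, abs_of_nonneg (sq_nonneg (2*Real.pi*x))]
    rw [e1, h3]
    have e2 : |(∫ ξ in Set.Ioi (0:ℝ), oE x (ξ:ℂ) * oG2 η t (ξ:ℂ)).re + η*t|
        ≤ |(∫ ξ in Set.Ioi (0:ℝ), oE x (ξ:ℂ) * oG2 η t (ξ:ℂ)).re| + η*t := by
      calc _ ≤ |(∫ ξ in Set.Ioi (0:ℝ), oE x (ξ:ℂ) * oG2 η t (ξ:ℂ)).re| + |η*t| := abs_add_le _ _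
        _ = _ := by rw [abs_of_pos ha]
    have e3 := Complex.abs_re_le_norm (∫ ξ in Set.Ioi (0:ℝ), oE x (ξ:ℂ) * oG2 η t (ξ:ℂ))
    linarith [hBnorm]
  have hπ : (2:ℝ) ≤ (2*Real.pi)^2 := by nlinarith [Real.pi_gt_three]
  have hK2 : x^2 * ‖ostKernel η t x‖ ≤ (∫ ξ in Set.Ioi (0:ℝ), WW η t ξ) + η*t := by
    rw [hKnorm]
    have e4 : (2:ℝ)*x^2*|J.re| ≤ (2*Real.pi*x)^2 * |J.re| := by
      have : (2:ℝ)*x^2 ≤ (2*Real.pi*x)^2 := by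
        calc (2:ℝ)*x^2 ≤ (2*Real.pi)^2 * x^2 := mul_le_mul_of_nonneg_right hπ (sq_nonneg x)
          _ = (2*Real.pi*x)^2 := by ring
      exact mul_le_mul_of_nonneg_right this (abs_nonneg _)
    calc x^2 * (2*|J.re|) = 2*x^2*|J.re| := by ring
      _ ≤ _ := e4
      _ ≤ _ := habs
  -- total
  have hden : (0:ℝ) < 1 + x^2 := by positivity
  have hWval := WW_val hη ht
  -- term bounds
  have hEpos : (0:ℝ) < Real.exp (5*(η*t)) * (η*t) ^ (-(1:ℝ)/3) := by positivity
  have hta : t + η*t = (η*t)*(1/η+1) := by field_simp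
  have haa23 : (η*t) * (η*t)^(-(2:ℝ)/3) = (η*t)^((1:ℝ)/3) := by
    rw [mul_comm, ← Real.rpow_add_one (ne_of_gt ha)]
    norm_num
  have ha2 : (η*t)^2 = (η*t)^((2:ℝ)) := by
    rw [← Real.rpow_natCast (η*t) 2]
    norm_num
  have haa53 : (η*t)^2 * (η*t)^(-(5:ℝ)/3) = (η*t)^((1:ℝ)/3) := by
    rw [ha2, ← Real.rpow_add ha]
    norm_num
  have haa1 : (η*t)^2 * (η*t)^(-(1:ℝ)) = (η*t)^((1:ℝ)) := by
    rw [ha2, ← Real.rpow_add ha]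
    norm_num
  have haa13 : (η*t)^2 * (η*t)^(-(1:ℝ)/3) = (η*t)^((5:ℝ)/3) := by
    rw [ha2, ← Real.rpow_add ha]
    norm_num
  have hr1 : (0:ℝ) < 1/η + 1 := by positivity
  -- T1
  have hT1 : 2 * (Real.exp (η*t) * VV (η*t/2) 0)
      ≤ 8 * Real.Gamma (1/3) * (Real.exp (5*(η*t)) * (η*t)^(-(1:ℝ)/3)) := by
    have s1 : Real.exp (η*t) * VV (η*t/2) 0
        ≤ Real.exp (η*t) * (4 * Real.Gamma (1/3) * (η*t)^(-(1:ℝ)/3)) :=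
      mul_le_mul_of_nonneg_left (hV0 ha) (Real.exp_pos _).le
    have s2 := hP_exp ha (p := -(1:ℝ)/3) (by norm_num) (by norm_num)
    calc 2 * (Real.exp (η*t) * VV (η*t/2) 0)
        ≤ 2 * (Real.exp (η*t) * (4 * Real.Gamma (1/3) * (η*t)^(-(1:ℝ)/3))) := by linarith
      _ = 8 * Real.Gamma (1/3) * (Real.exp (η*t) * (η*t)^(-(1:ℝ)/3)) := by ring
      _ ≤ 8 * Real.Gamma (1/3) * (Real.exp (5*(η*t)) * (η*t)^(-(1:ℝ)/3)) := by
          apply mul_le_mul_of_nonneg_left s2 (by positivity)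
  -- T2
  have hT2 : η*t ≤ Real.exp (5*(η*t)) * (η*t)^(-(1:ℝ)/3) := by
    have s1 : η*t ≤ Real.exp (η*t) * (η*t)^((1:ℝ)) := by
      rw [Real.rpow_one]
      nlinarith [Real.one_le_exp (le_of_lt ha)]
    have s2 := hP_exp ha (p := (1:ℝ)) (by norm_num) (by norm_num)
    linarith
  -- T3
  have hT3 : Real.exp (η*t) * (6*(t+η*t) * VV (η*t/2) 1)
      ≤ 24 * Real.Gamma (2/3) * (1/η+1) * (Real.exp (5*(η*t)) * (η*t)^(-(1:ℝ)/3)) := by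
    have s1 : Real.exp (η*t) * (6*(t+η*t) * VV (η*t/2) 1)
        ≤ Real.exp (η*t) * (6*(t+η*t) * (4 * Real.Gamma (2/3) * (η*t)^(-(2:ℝ)/3))) := by
      apply mul_le_mul_of_nonneg_left _ (Real.exp_pos _).le
      apply mul_le_mul_of_nonneg_left (hV1 ha) (by positivity)
    have s2 : Real.exp (η*t) * (6*(t+η*t) * (4 * Real.Gamma (2/3) * (η*t)^(-(2:ℝ)/3)))
        = 24 * Real.Gamma (2/3) * (1/η+1) * (Real.exp (η*t) * (η*t)^((1:ℝ)/3)) := by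
      rw [hta, ← haa23]
      ring
    have s3 := hP_exp ha (p := (1:ℝ)/3) (by norm_num) (by norm_num)
    calc Real.exp (η*t) * (6*(t+η*t) * VV (η*t/2) 1) ≤ _ := s1
      _ = _ := s2
      _ ≤ 24 * Real.Gamma (2/3) * (1/η+1) * (Real.exp (5*(η*t)) * (η*t)^(-(1:ℝ)/3)) := by
          apply mul_le_mul_of_nonneg_left s3 (by positivity)
  -- T4
  have hT4 : Real.exp (η*t) * (9*(t+η*t)^2 * VV (η*t/2) 4)
      ≤ 36 * Real.Gamma (5/3) * (1/η+1)^2 * (Real.exp (5*(η*t)) * (η*t)^(-(1:ℝ)/3)) := by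
    have s1 : Real.exp (η*t) * (9*(t+η*t)^2 * VV (η*t/2) 4)
        ≤ Real.exp (η*t) * (9*(t+η*t)^2 * (4 * Real.Gamma (5/3) * (η*t)^(-(5:ℝ)/3))) := by
      apply mul_le_mul_of_nonneg_left _ (Real.exp_pos _).le
      apply mul_le_mul_of_nonneg_left (hV4 ha) (by positivity)
    have s2 : Real.exp (η*t) * (9*(t+η*t)^2 * (4 * Real.Gamma (5/3) * (η*t)^(-(5:ℝ)/3)))
        = 36 * Real.Gamma (5/3) * (1/η+1)^2 * (Real.exp (η*t) * ((η*t)^2 * (η*t)^(-(5:ℝ)/3))) := by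
      rw [hta]
      ring
    have s3 := hP_exp ha (p := (1:ℝ)/3) (by norm_num) (by norm_num)
    calc Real.exp (η*t) * (9*(t+η*t)^2 * VV (η*t/2) 4) ≤ _ := s1
      _ = _ := s2
      _ = 36 * Real.Gamma (5/3) * (1/η+1)^2 * (Real.exp (η*t) * (η*t)^((1:ℝ)/3)) := by
          rw [haa53]
      _ ≤ 36 * Real.Gamma (5/3) * (1/η+1)^2 * (Real.exp (5*(η*t)) * (η*t)^(-(1:ℝ)/3)) := by
          apply mul_le_mul_of_nonneg_left s3 (by positivity)
  -- T5
  have hT5 : Real.exp (η*t) * (6*(η*t)*(t+η*t) * VV (η*t/2) 2)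
      ≤ 24 * Real.Gamma 1 * (1/η+1) * (Real.exp (5*(η*t)) * (η*t)^(-(1:ℝ)/3)) := by
    have s1 : Real.exp (η*t) * (6*(η*t)*(t+η*t) * VV (η*t/2) 2)
        ≤ Real.exp (η*t) * (6*(η*t)*(t+η*t) * (4 * Real.Gamma 1 * (η*t)^(-(1:ℝ)))) := by
      apply mul_le_mul_of_nonneg_left _ (Real.exp_pos _).le
      apply mul_le_mul_of_nonneg_left (hV2 ha) (by positivity)
    have s2 : Real.exp (η*t) * (6*(η*t)*(t+η*t) * (4 * Real.Gamma 1 * (η*t)^(-(1:ℝ))))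
        = 24 * Real.Gamma 1 * (1/η+1) * (Real.exp (η*t) * ((η*t)^2 * (η*t)^(-(1:ℝ)))) := by
      rw [hta]
      ring
    have s3 := hP_exp ha (p := (1:ℝ)) (by norm_num) (by norm_num)
    calc Real.exp (η*t) * (6*(η*t)*(t+η*t) * VV (η*t/2) 2) ≤ _ := s1
      _ = _ := s2
      _ = 24 * Real.Gamma 1 * (1/η+1) * (Real.exp (η*t) * (η*t)^((1:ℝ))) := by rw [haa1]
      _ ≤ 24 * Real.Gamma 1 * (1/η+1) * (Real.exp (5*(η*t)) * (η*t)^(-(1:ℝ)/3)) := by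
          apply mul_le_mul_of_nonneg_left s3 (by positivity)
  -- T6
  have hT6 : Real.exp (η*t) * ((η*t)^2 * VV (η*t/2) 0)
      ≤ 4 * Real.Gamma (1/3) * (Real.exp (5*(η*t)) * (η*t)^(-(1:ℝ)/3)) := by
    have s1 : Real.exp (η*t) * ((η*t)^2 * VV (η*t/2) 0)
        ≤ Real.exp (η*t) * ((η*t)^2 * (4 * Real.Gamma (1/3) * (η*t)^(-(1:ℝ)/3))) := by
      apply mul_le_mul_of_nonneg_left _ (Real.exp_pos _).le
      apply mul_le_mul_of_nonneg_left (hV0 ha) (by positivity)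
    have s2 : Real.exp (η*t) * ((η*t)^2 * (4 * Real.Gamma (1/3) * (η*t)^(-(1:ℝ)/3)))
        = 4 * Real.Gamma (1/3) * (Real.exp (η*t) * ((η*t)^2 * (η*t)^(-(1:ℝ)/3))) := by ring
    have s3 := hP_exp ha (p := (5:ℝ)/3) (by norm_num) (by norm_num)
    calc Real.exp (η*t) * ((η*t)^2 * VV (η*t/2) 0) ≤ _ := s1
      _ = _ := s2
      _ = 4 * Real.Gamma (1/3) * (Real.exp (η*t) * (η*t)^((5:ℝ)/3)) := by rw [haa13]
      _ ≤ 4 * Real.Gamma (1/3) * (Real.exp (5*(η*t)) * (η*t)^(-(1:ℝ)/3)) := by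
          apply mul_le_mul_of_nonneg_left s3 (by positivity)
  -- bracket bound
  have hD1 : (1:ℝ) ≤ 1 + (1/η+2)^2 := by nlinarith [sq_nonneg (1/η+2)]
  have hDr : 1/η + 1 ≤ 1 + (1/η+2)^2 := by nlinarith [sq_nonneg (1/η), hr1]
  have hDr2 : (1/η+1)^2 ≤ 1 + (1/η+2)^2 := by nlinarith [hr1]
  have hbr : 8*Real.Gamma (1/3) + 1 + 24*Real.Gamma (2/3)*(1/η+1) + 36*Real.Gamma (5/3)*(1/η+1)^2
        + 24*Real.Gamma 1*(1/η+1) + 4*Real.Gamma (1/3)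
      ≤ (100 * (Real.Gamma (1/3) + Real.Gamma (2/3) + Real.Gamma 1 + Real.Gamma (5/3) + 1))
        * (1 + (1/η+2)^2) := by
    nlinarith [mul_le_mul_of_nonneg_left hDr hΓ23.le, mul_le_mul_of_nonneg_left hDr2 hΓ53.le,
      mul_le_mul_of_nonneg_left hDr hΓ1.le, mul_le_mul_of_nonneg_left hD1 hΓ13.le,
      hΓ13, hΓ23, hΓ1, hΓ53, hD1]
  -- combine everything
  have hfin : ‖ostKernel η t x‖ * (1 + x^2)
      ≤ (100 * (Real.Gamma (1/3) + Real.Gamma (2/3) + Real.Gamma 1 + Real.Gamma (5/3) + 1))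
        * (1 + (1/η+2)^2) * (Real.exp (5*(η*t)) * (η*t)^(-(1:ℝ)/3)) := by
    have step : ‖ostKernel η t x‖ * (1 + x^2)
        ≤ (8*Real.Gamma (1/3) + 1 + 24*Real.Gamma (2/3)*(1/η+1)
            + 36*Real.Gamma (5/3)*(1/η+1)^2 + 24*Real.Gamma 1*(1/η+1) + 4*Real.Gamma (1/3))
          * (Real.exp (5*(η*t)) * (η*t)^(-(1:ℝ)/3)) := by
      have expand : ‖ostKernel η t x‖ * (1 + x^2)
          = ‖ostKernel η t x‖ + x^2 * ‖ostKernel η t x‖ := by ring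
      rw [expand]
      have hWsum : (∫ ξ in Set.Ioi (0:ℝ), WW η t ξ)
          = Real.exp (η*t) * (6*(t+η*t) * VV (η*t/2) 1)
            + Real.exp (η*t) * (9*(t+η*t)^2 * VV (η*t/2) 4)
            + Real.exp (η*t) * (6*(η*t)*(t+η*t) * VV (η*t/2) 2)
            + Real.exp (η*t) * ((η*t)^2 * VV (η*t/2) 0) := by
        rw [hWval]
        ring
      rw [hWsum] at hK2
      linarith [hK1, hK2, hT1, hT2, hT3, hT4, hT5, hT6]
    calc ‖ostKernel η t x‖ * (1 + x^2) ≤ _ := step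
      _ ≤ _ := mul_le_mul_of_nonneg_right hbr hEpos.le
  -- convert to the target form
  have hsplitp : (η*t) ^ (-(1:ℝ)/3) = η ^ (-(1:ℝ)/3) * t ^ (-(1:ℝ)/3) :=
    Real.mul_rpow hη.le ht.le
  have htneg : t ^ (-(1:ℝ)/3) = (t ^ ((1:ℝ)/3))⁻¹ := by
    rw [show (-(1:ℝ)/3) = -((1:ℝ)/3) by norm_num, Real.rpow_neg ht.le]
  calc ‖ostKernel η t x‖
      ≤ ((100 * (Real.Gamma (1/3) + Real.Gamma (2/3) + Real.Gamma 1 + Real.Gamma (5/3) + 1))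
          * (1 + (1/η+2)^2) * (Real.exp (5*(η*t)) * (η*t)^(-(1:ℝ)/3))) / (1 + x^2) :=
        (le_div_iff₀ hden).2 hfin
    _ = (100 * (Real.Gamma (1/3) + Real.Gamma (2/3) + Real.Gamma 1 + Real.Gamma (5/3) + 1)
          * η ^ (-(1:ℝ)/3) * (1 + (1/η + 2) ^ 2)) *
        (Real.exp (5 * η * t) / t ^ ((1:ℝ)/3)) * (1 / (1 + |x| ^ 2)) := by
        rw [sq_abs, hsplitp, htneg, show (5*η*t) = 5*(η*t) by ring]
        ring
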